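/- Parameter-counting certificate bound: Let X be a domain, let P be a finite nonempty parameter set, and let Φ : P → (X → Bool) be any map with image H = Φ(P). Then there exists f ∈ H with cert(f, H) ≤ ⌈log₂ |P|⌉. In particular, a hypothesis class described by N parameter slots each taking at most D values contains a hypothesis with certificate size at most ⌈N · log₂ D⌉. -/

import Mathlib

/-- `S` is an input-output certificate for `f` in `H`: every `h ∈ H` agreeing with
`f` on all points of `S` agrees with `f` everywhere. -/
def IsCert {X : Type*} (H : Set (X → Bool)) (f : X → Bool) (S : Finset X) : Prop :=
  ∀ h ∈ H, (∀ x ∈ S, h x = f x) → ∀ x, h x = f x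

/-- The certificate size: the minimum cardinality of an input-output certificate. -/
noncomputable def cert {X : Type*} (H : Set (X → Bool)) (f : X → Bool) : ℕ :=
  sInf {k : ℕ | ∃ S : Finset X, S.card = k ∧ IsCert H f S}

lemma key {X : Type*} : ∀ n (H : Set (X → Bool)), H.Finite → H.Nonempty → H.ncard ≤ n →
    ∃ f ∈ H, ∃ S : Finset X, S.card ≤ Nat.clog 2 H.ncard ∧ IsCert H f S := by
  intro n
  classical
  induction n with
  | zero =>
    intro H hfin hne hle
    have := (Set.ncard_pos hfin).2 hne
    omega
  | succ n ih =>
    intro H hfin hne hle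
    by_cases hconst : ∀ h₁ ∈ H, ∀ h₂ ∈ H, h₁ = h₂
    · obtain ⟨f, hf⟩ := hne
      exact ⟨f, hf, ∅, by simp, fun h hh _ x => by rw [hconst h hh f hf]⟩
    · push_neg at hconst
      obtain ⟨h₁, hh₁, h₂, hh₂, hne12⟩ := hconst
      obtain ⟨x, hx⟩ : ∃ x, h₁ x ≠ h₂ x := by
        by_contra hc; push_neg at hc; exact hne12 (funext hc)
      -- choose the smaller half
      have hcard2 : 2 ≤ H.ncard := by
        have := Set.one_lt_ncard_iff hfin |>.2 ⟨h₁, h₂, hh₁, hh₂, hne12⟩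
        omega
      obtain ⟨b, hbne, hbhalf⟩ :
          ∃ b : Bool, ({h ∈ H | h x = b}).Nonempty ∧
            2 * ({h ∈ H | h x = b}).ncard ≤ H.ncard := by
        have hdisj : Disjoint {h ∈ H | h x = true} {h ∈ H | h x = false} := by
          rw [Set.disjoint_left]; rintro h ⟨-, ht⟩ ⟨-, hf'⟩; simp [ht] at hf'
        have hunion : {h ∈ H | h x = true} ∪ {h ∈ H | h x = false} = H := by
          ext h; by_cases hh : h x = true <;> simp_all
        have hsum : ({h ∈ H | h x = true}).ncard + ({h ∈ H | h x = false}).ncard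
            = H.ncard := by
          rw [← Set.ncard_union_eq hdisj (hfin.subset (Set.sep_subset _ _))
            (hfin.subset (Set.sep_subset _ _)), hunion]
        have hmemT : ({h ∈ H | h x = true}).Nonempty := by
          cases hb1 : h₁ x
          · exact ⟨h₂, hh₂, by revert hx; cases h₂ x <;> simp [hb1]⟩
          · exact ⟨h₁, hh₁, hb1⟩
        have hmemF : ({h ∈ H | h x = false}).Nonempty := by
          cases hb1 : h₁ x
          · exact ⟨h₁, hh₁, hb1⟩
          · exact ⟨h₂, hh₂, by revert hx; cases h₂ x <;> simp [hb1]⟩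
        by_cases hc : 2 * ({h ∈ H | h x = true}).ncard ≤ H.ncard
        · exact ⟨true, hmemT, hc⟩
        · refine ⟨false, hmemF, ?_⟩
          obtain ⟨a, ha⟩ : ∃ a, ({h ∈ H | h x = true}).ncard = a := ⟨_, rfl⟩
          obtain ⟨c, hc2⟩ : ∃ c, ({h ∈ H | h x = false}).ncard = c := ⟨_, rfl⟩
          rw [ha, hc2] at hsum
          rw [ha] at hc
          rw [hc2]
          clear ha hc2 hdisj hunion hmemT hmemF
          omega
      set Hb := {h ∈ H | h x = b} with hHb
      have hbfin : Hb.Finite := hfin.subset (fun h hh => hh.1)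
      have hb1 : 1 ≤ Hb.ncard := (Set.ncard_pos hbfin).2 hbne
      have hble : Hb.ncard ≤ n := by omega
      obtain ⟨f, hf, S, hScard, hScert⟩ := ih Hb hbfin hbne hble
      -- clog bound: clog 2 Hb.ncard + 1 ≤ clog 2 H.ncard
      have hc1 : 1 ≤ Nat.clog 2 H.ncard := Nat.clog_pos one_lt_two hcard2
      have hclog : Nat.clog 2 Hb.ncard + 1 ≤ Nat.clog 2 H.ncard := by
        have h1 : H.ncard ≤ 2 ^ Nat.clog 2 H.ncard := Nat.le_pow_clog one_lt_two _
        have h2 : Hb.ncard ≤ 2 ^ (Nat.clog 2 H.ncard - 1) := by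
          have : 2 ^ Nat.clog 2 H.ncard = 2 * 2 ^ (Nat.clog 2 H.ncard - 1) := by
            rw [← pow_succ']; congr 1; omega
          omega
        have := (Nat.clog_le_iff_le_pow one_lt_two).2 h2
        omega
      refine ⟨f, hf.1, insert x S, ?_, ?_⟩
      · calc (insert x S).card ≤ S.card + 1 := Finset.card_insert_le _ _
          _ ≤ Nat.clog 2 Hb.ncard + 1 := by omega
          _ ≤ _ := hclog
      · intro h hh hagree y
        have hhx : h x = f x := hagree x (Finset.mem_insert_self _ _)
        have hhb : h ∈ Hb := ⟨hh, by rw [hhx, hf.2]⟩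
        exact hScert h hhb (fun z hz => hagree z (Finset.mem_insert_of_mem hz)) y

lemma cert_le {X : Type*} (H : Set (X → Bool)) (hfin : H.Finite) (hne : H.Nonempty) :
    ∃ f ∈ H, cert H f ≤ Nat.clog 2 H.ncard := by
  obtain ⟨f, hf, S, hScard, hScert⟩ := key H.ncard H hfin hne le_rfl
  exact ⟨f, hf, le_trans (Nat.sInf_le ⟨S, rfl, hScert⟩) hScard⟩

/-- **Parameter-counting certificate bound.** If `H` is the image of a finite nonempty
parameter set `P` under a parametrization `Φ`, then some `f ∈ H` has certificate size
at most `⌈log₂ |P|⌉`. In particular, a class described by `N` parameter slots each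
taking at most `D ≥ 1` values contains a hypothesis with certificate size at most
`⌈N · log₂ D⌉`. -/
lemma main' {X : Type*} (P : Type*) [Fintype P] [Nonempty P] (Φ : P → X → Bool) :
    ∃ f ∈ Set.range Φ, cert (Set.range Φ) f ≤ Nat.clog 2 (Fintype.card P) := by
  obtain ⟨f, hf, hle⟩ := cert_le (Set.range Φ) (Set.finite_range Φ) (Set.range_nonempty Φ)
  refine ⟨f, hf, hle.trans (Nat.clog_mono_right 2 ?_)⟩
  calc (Set.range Φ).ncard = ((Set.univ : Set P).image Φ).ncard := by
        rw [Set.image_univ]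
    _ ≤ (Set.univ : Set P).ncard := Set.ncard_image_le Set.finite_univ
    _ = Fintype.card P := by rw [Set.ncard_univ, Nat.card_eq_fintype_card]

theorem stmt14 {X : Type*} :
    (∀ (P : Type*) [Fintype P] [Nonempty P] (Φ : P → X → Bool),
      ∃ f ∈ Set.range Φ, cert (Set.range Φ) f ≤ Nat.clog 2 (Fintype.card P)) ∧
    (∀ (N D : ℕ), 1 ≤ D → ∀ Ψ : (Fin N → Fin D) → X → Bool,
      ∃ f ∈ Set.range Ψ, cert (Set.range Ψ) f ≤ ⌈(N : ℝ) * Real.logb 2 D⌉₊) := by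
  refine ⟨fun P _ _ Φ => main' P Φ, fun N D hD Ψ => ?_⟩
  haveI : Nonempty (Fin D) := ⟨⟨0, hD⟩⟩
  obtain ⟨f, hf, hle⟩ := main' (Fin N → Fin D) Ψ
  refine ⟨f, hf, hle.trans ?_⟩
  rw [Fintype.card_fun, Fintype.card_fin, Fintype.card_fin]
  rw [Nat.clog_le_iff_le_pow one_lt_two]
  have hD0 : (0:ℝ) < D := by exact_mod_cast hD
  have : ((D : ℝ)) ^ N ≤ 2 ^ (⌈(N : ℝ) * Real.logb 2 D⌉₊ : ℕ) := by
    have h1 : (D : ℝ) ^ N = (2 : ℝ) ^ ((N : ℝ) * Real.logb 2 D) := by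
      rw [mul_comm, Real.rpow_mul (by norm_num : (0:ℝ) ≤ 2),
        Real.rpow_logb (by norm_num) (by norm_num) hD0, ← Real.rpow_natCast ((D:ℝ)) N]
    rw [h1, ← Real.rpow_natCast 2 (⌈(N : ℝ) * Real.logb 2 D⌉₊)]
    exact Real.rpow_le_rpow_of_exponent_le (by norm_num) (Nat.le_ceil _)
  exact_mod_cast this
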